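/- arXiv:1211.1197 — 2 statements merged into one kernel-verified Lean document; each statement's English description precedes it below -/
import Mathlib

section
/- For any α, β > 0 and any θ₀, θ₁ ∈ ℝ^n, there exists a test φ (a measurable function of X with values in [0,1]) such that for every θ ∈ ℝ^n with ‖θ − θ₁‖ ≤ ‖θ₀ − θ₁‖/2 =: ρ, one has α·E_{θ₀}[φ] + β·E_θ[1−φ] ≤ α·Φ̄(ρ/2 + (1/ρ)log(α/β)) + β·Φ(−ρ/2 + (1/ρ)log(α/β)), where Φ is the standard normal CDF and Φ̄ = 1 − Φ. -/
open MeasureTheory Real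

/-- The density of `N(θ, I_n)` on `ℝ^n`. -/
noncomputable def gaussDensity {n : ℕ} (θ x : EuclideanSpace ℝ (Fin n)) : ℝ :=
  (2 * Real.pi) ^ (-(n : ℝ) / 2) * Real.exp (-‖x - θ‖ ^ 2 / 2)

/-- The Gaussian measure `N(θ, I_n)` on `ℝ^n`. -/
noncomputable def gaussMeasure {n : ℕ} (θ : EuclideanSpace ℝ (Fin n)) :
    Measure (EuclideanSpace ℝ (Fin n)) :=
  volume.withDensity (fun x => ENNReal.ofReal (gaussDensity θ x))

/-- The standard normal distribution function. -/
noncomputable def stdNormalCDF (t : ℝ) : ℝ :=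
  (2 * Real.pi) ^ (-(1 : ℝ) / 2) * ∫ x in Set.Iic t, Real.exp (-x ^ 2 / 2)

/-! ### One-dimensional facts -/

lemma gauss_fun_eq : (fun s : ℝ => Real.exp (-s ^ 2 / 2)) = fun s => Real.exp (-(1/2) * s ^ 2) := by
  funext s; ring_nf

lemma gauss_integrable : Integrable (fun s : ℝ => Real.exp (-s ^ 2 / 2)) := by
  rw [gauss_fun_eq]; exact integrable_exp_neg_mul_sq (by norm_num)

lemma gauss_total : ∫ s : ℝ, Real.exp (-s ^ 2 / 2) = Real.sqrt (2 * π) := by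
  rw [gauss_fun_eq, integral_gaussian]
  rw [show π / (1/2) = 2 * π by ring]

lemma rpow_half_mul : (2 * π) ^ (-(1 : ℝ) / 2) * Real.sqrt (2 * π) = 1 := by
  rw [Real.sqrt_eq_rpow, ← Real.rpow_add Real.two_pi_pos]
  norm_num

lemma stdNormalCDF_add_Ici (t : ℝ) :
    stdNormalCDF t + (2 * π) ^ (-(1 : ℝ) / 2) * ∫ s in Set.Ici t, Real.exp (-s ^ 2 / 2) = 1 := by
  rw [stdNormalCDF, integral_Ici_eq_integral_Ioi, ← mul_add,
    intervalIntegral.integral_Iic_add_Ioi gauss_integrable.integrableOn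
      gauss_integrable.integrableOn,
    gauss_total, rpow_half_mul]

lemma one_sub_stdNormalCDF (t : ℝ) :
    1 - stdNormalCDF t = (2 * π) ^ (-(1 : ℝ) / 2) * ∫ s in Set.Ici t, Real.exp (-s ^ 2 / 2) := by
  have := stdNormalCDF_add_Ici t; linarith

lemma stdNormalCDF_mono {s t : ℝ} (h : s ≤ t) : stdNormalCDF s ≤ stdNormalCDF t := by
  unfold stdNormalCDF
  refine mul_le_mul_of_nonneg_left ?_ (by positivity)
  refine setIntegral_mono_set gauss_integrable.integrableOn ?_ ?_
  · exact Filter.Eventually.of_forall fun x => (Real.exp_pos _).le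
  · exact Filter.Eventually.of_forall (Set.Iic_subset_Iic.2 h)

lemma stdNormalCDF_zero : stdNormalCDF 0 = 1 / 2 := by
  have h1 : ∫ s in Set.Iic (0:ℝ), Real.exp (-s ^ 2 / 2)
      = ∫ s in Set.Ioi (0:ℝ), Real.exp (-s ^ 2 / 2) := by
    have := integral_comp_neg_Iic (0:ℝ) (fun s => Real.exp (-s ^ 2 / 2))
    simp only [neg_neg, neg_zero, neg_sq] at this
    simpa using this.symm ▸ rfl
  have h2 := stdNormalCDF_add_Ici 0
  rw [integral_Ici_eq_integral_Ioi, ← h1, stdNormalCDF] at h2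
  rw [stdNormalCDF]
  linarith

/-! ### The Gaussian measure -/

lemma gaussDensity_nonneg {n : ℕ} (θ x : EuclideanSpace ℝ (Fin n)) : 0 ≤ gaussDensity θ x := by
  unfold gaussDensity; positivity

lemma gaussDensity_continuous {n : ℕ} (θ : EuclideanSpace ℝ (Fin n)) :
    Continuous (gaussDensity θ) := by
  unfold gaussDensity
  fun_prop

lemma integral_gaussMeasure {n : ℕ} (θ : EuclideanSpace ℝ (Fin n))
    (f : EuclideanSpace ℝ (Fin n) → ℝ) :
    ∫ x, f x ∂(gaussMeasure θ) = ∫ x, gaussDensity θ x * f x := by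
  have hm : Measurable fun x : EuclideanSpace ℝ (Fin n) => (gaussDensity θ x).toNNReal :=
    (measurable_real_toNNReal).comp (gaussDensity_continuous θ).measurable
  have h : (fun x : EuclideanSpace ℝ (Fin n) => ENNReal.ofReal (gaussDensity θ x))
      = fun x => ((gaussDensity θ x).toNNReal : ENNReal) := rfl
  rw [gaussMeasure, h, integral_withDensity_eq_integral_smul hm]
  congr 1
  funext x
  simp [NNReal.smul_def, Real.coe_toNNReal _ (gaussDensity_nonneg θ x)]

lemma gauss_core {n : ℕ} (b : OrthonormalBasis (Fin n) ℝ (EuclideanSpace ℝ (Fin n))) (i₀ : Fin n)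
    (θ : EuclideanSpace ℝ (Fin n)) (g : ℝ → ℝ) :
    ∫ x, gaussDensity θ x * g (inner ℝ (b i₀) x : ℝ) =
      (2 * π) ^ (-(1:ℝ) / 2) *
        ∫ s : ℝ, Real.exp (-s ^ 2 / 2) * g (s + (inner ℝ (b i₀) θ : ℝ)) := by
  set m : ℝ := (inner ℝ (b i₀) θ : ℝ) with hm
  set me : EuclideanSpace ℝ (Fin n) ≃ᵐ EuclideanSpace ℝ (Fin n) :=
    (b.repr.symm.toHomeomorph.toMeasurableEquiv).trans
      (Homeomorph.addRight θ).toMeasurableEquiv with hme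
  have hT : MeasurePreserving me volume volume :=
    (measurePreserving_add_right volume θ).comp b.measurePreserving_repr_symm
  rw [← hT.integral_comp me.measurableEmbedding]
  have hTy : ∀ y, me y = b.repr.symm y + θ := fun y => rfl
  have hstep : ∀ y : EuclideanSpace ℝ (Fin n),
      gaussDensity θ (me y) * g (inner ℝ (b i₀) (me y) : ℝ)
        = (2 * π) ^ (-(n : ℝ) / 2) * (Real.exp (-‖y‖ ^ 2 / 2) * g (y i₀ + m)) := by
    intro y
    have h1 : ‖me y - θ‖ = ‖y‖ := by
      rw [hTy, add_sub_cancel_right, b.repr.symm.norm_map]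
    have h2 : (inner ℝ (b i₀) (me y) : ℝ) = y i₀ + m := by
      rw [hTy, inner_add_right, hm]
      congr 1
      rw [← OrthonormalBasis.repr_apply_apply, LinearIsometryEquiv.apply_symm_apply]
    rw [gaussDensity, h1, h2, mul_assoc]
  simp_rw [hstep]
  rw [integral_const_mul]
  set f : Fin n → ℝ → ℝ :=
    fun i s => Real.exp (-s ^ 2 / 2) * (if i = i₀ then g (s + m) else 1) with hf
  have h4 : ∫ y : EuclideanSpace ℝ (Fin n), Real.exp (-‖y‖ ^ 2 / 2) * g (y i₀ + m)
      = ∫ z : Fin n → ℝ, ∏ i, f i (z i) := by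
    rw [← ((EuclideanSpace.volume_preserving_symm_measurableEquiv_toLp (Fin n)).symm).integral_comp
      (MeasurableEquiv.measurableEmbedding _)
      (fun y => Real.exp (-‖y‖ ^ 2 / 2) * g (y i₀ + m))]
    congr 1
    funext z
    have hz : ∀ i, (MeasurableEquiv.toLp 2 (Fin n → ℝ)).symm.symm z i = z i := fun _ => rfl
    have hnorm : ‖(MeasurableEquiv.toLp 2 (Fin n → ℝ)).symm.symm z‖ ^ 2 = ∑ i, z i ^ 2 := by
      rw [EuclideanSpace.norm_eq, Real.sq_sqrt (by positivity)]
      simp [hz, Real.norm_eq_abs, sq_abs]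
    rw [hnorm, hz]
    have hsum : -(∑ i, z i ^ 2) / 2 = ∑ i, -(z i ^ 2) / 2 := by
      rw [← Finset.sum_neg_distrib, Finset.sum_div]
    rw [hsum, Real.exp_sum, hf]
    simp only []
    rw [Finset.prod_mul_distrib, Finset.prod_ite_eq', if_pos (Finset.mem_univ i₀)]
  rw [h4, MeasureTheory.integral_fintype_prod_volume_eq_prod f,
    ← Finset.mul_prod_erase Finset.univ _ (Finset.mem_univ i₀)]
  have h5 : ∫ s, f i₀ s = ∫ s : ℝ, Real.exp (-s ^ 2 / 2) * g (s + m) := by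
    simp [hf]
  have h6 : ∏ i ∈ Finset.univ.erase i₀, ∫ s, f i s = Real.sqrt (2 * π) ^ (n - 1) := by
    rw [Finset.prod_congr rfl (fun i hi => ?_), Finset.prod_const,
      Finset.card_erase_of_mem (Finset.mem_univ i₀), Finset.card_univ, Fintype.card_fin]
    rw [hf]
    simp only [if_neg (Finset.ne_of_mem_erase hi), mul_one]
    exact gauss_total
  rw [h5, h6]
  have hn1 : 1 ≤ n := i₀.pos
  have hconst : (2 * π) ^ (-(n : ℝ) / 2) * Real.sqrt (2 * π) ^ (n - 1)
      = (2 * π) ^ (-(1:ℝ) / 2) := by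
    rw [Real.sqrt_eq_rpow, ← Real.rpow_natCast ((2*π) ^ ((1:ℝ)/2)) (n-1),
      ← Real.rpow_mul Real.two_pi_pos.le, ← Real.rpow_add Real.two_pi_pos]
    congr 1
    rw [Nat.cast_sub hn1]
    push_cast
    ring
  rw [← hconst]
  ring

lemma gauss_halfspace_ge {n : ℕ} (b : OrthonormalBasis (Fin n) ℝ (EuclideanSpace ℝ (Fin n)))
    (i₀ : Fin n) (θ : EuclideanSpace ℝ (Fin n)) (c : ℝ) :
    ∫ x, Set.indicator {x : EuclideanSpace ℝ (Fin n) | c ≤ (inner ℝ (b i₀) x : ℝ)}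
        (fun _ => (1:ℝ)) x ∂(gaussMeasure θ)
      = 1 - stdNormalCDF (c - (inner ℝ (b i₀) θ : ℝ)) := by
  rw [integral_gaussMeasure]
  have h1 : ∀ x : EuclideanSpace ℝ (Fin n),
      Set.indicator {x : EuclideanSpace ℝ (Fin n) | c ≤ (inner ℝ (b i₀) x : ℝ)}
        (fun _ => (1:ℝ)) x
      = Set.indicator (Set.Ici c) (fun _ => (1:ℝ)) ((inner ℝ (b i₀) x : ℝ)) := by
    intro x
    by_cases h : c ≤ (inner ℝ (b i₀) x : ℝ) <;>
      simp [Set.indicator_apply, h]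
  simp_rw [h1]
  rw [gauss_core b i₀ θ (Set.indicator (Set.Ici c) fun _ => (1:ℝ))]
  have h2 : (fun s : ℝ => Real.exp (-s ^ 2 / 2) *
      Set.indicator (Set.Ici c) (fun _ => (1:ℝ)) (s + (inner ℝ (b i₀) θ : ℝ)))
      = Set.indicator (Set.Ici (c - (inner ℝ (b i₀) θ : ℝ)))
          (fun s => Real.exp (-s ^ 2 / 2)) := by
    funext s
    simp only [Set.indicator_apply, Set.mem_Ici]
    by_cases h : c - (inner ℝ (b i₀) θ : ℝ) ≤ s
    · rw [if_pos h, if_pos (by linarith), mul_one]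
    · rw [if_neg h, if_neg (fun hc => h (by linarith)), mul_zero]
  rw [h2, integral_indicator measurableSet_Ici, ← one_sub_stdNormalCDF]

lemma gauss_halfspace_lt {n : ℕ} (b : OrthonormalBasis (Fin n) ℝ (EuclideanSpace ℝ (Fin n)))
    (i₀ : Fin n) (θ : EuclideanSpace ℝ (Fin n)) (c : ℝ) :
    ∫ x, Set.indicator {x : EuclideanSpace ℝ (Fin n) | (inner ℝ (b i₀) x : ℝ) < c}
        (fun _ => (1:ℝ)) x ∂(gaussMeasure θ)
      = stdNormalCDF (c - (inner ℝ (b i₀) θ : ℝ)) := by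
  rw [integral_gaussMeasure]
  have h1 : ∀ x : EuclideanSpace ℝ (Fin n),
      Set.indicator {x : EuclideanSpace ℝ (Fin n) | (inner ℝ (b i₀) x : ℝ) < c}
        (fun _ => (1:ℝ)) x
      = Set.indicator (Set.Iio c) (fun _ => (1:ℝ)) ((inner ℝ (b i₀) x : ℝ)) := by
    intro x
    by_cases h : (inner ℝ (b i₀) x : ℝ) < c <;>
      simp [Set.indicator_apply, h]
  simp_rw [h1]
  rw [gauss_core b i₀ θ (Set.indicator (Set.Iio c) fun _ => (1:ℝ))]
  have h2 : (fun s : ℝ => Real.exp (-s ^ 2 / 2) *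
      Set.indicator (Set.Iio c) (fun _ => (1:ℝ)) (s + (inner ℝ (b i₀) θ : ℝ)))
      = Set.indicator (Set.Iio (c - (inner ℝ (b i₀) θ : ℝ)))
          (fun s => Real.exp (-s ^ 2 / 2)) := by
    funext s
    simp only [Set.indicator_apply, Set.mem_Iio]
    by_cases h : s < c - (inner ℝ (b i₀) θ : ℝ)
    · rw [if_pos h, if_pos (by linarith), mul_one]
    · rw [if_neg h, if_neg (fun hc => h (by linarith)), mul_zero]
  rw [h2, integral_indicator measurableSet_Iio, stdNormalCDF, integral_Iic_eq_integral_Iio]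


lemma measurable_inner_test {n : ℕ} (u : EuclideanSpace ℝ (Fin n)) (c : ℝ) :
    MeasurableSet {x : EuclideanSpace ℝ (Fin n) | c ≤ (inner ℝ u x : ℝ)} :=
  measurableSet_le measurable_const (Continuous.measurable (continuous_const.inner continuous_id))

lemma indicator_test_measurable {n : ℕ} (u : EuclideanSpace ℝ (Fin n)) (c : ℝ) :
    Measurable (Set.indicator {x : EuclideanSpace ℝ (Fin n) | c ≤ (inner ℝ u x : ℝ)}
      (fun _ => (1:ℝ))) :=
  measurable_const.indicator (measurable_inner_test u c)

lemma indicator_test_mem_Icc {n : ℕ} (u : EuclideanSpace ℝ (Fin n)) (c : ℝ)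
    (x : EuclideanSpace ℝ (Fin n)) :
    Set.indicator {x : EuclideanSpace ℝ (Fin n) | c ≤ (inner ℝ u x : ℝ)} (fun _ => (1:ℝ)) x
      ∈ Set.Icc (0:ℝ) 1 := by
  rw [Set.mem_Icc, Set.indicator_apply]
  split <;> norm_num

lemma one_sub_indicator_test {n : ℕ} (u : EuclideanSpace ℝ (Fin n)) (c : ℝ) :
    (fun x : EuclideanSpace ℝ (Fin n) =>
        1 - Set.indicator {x : EuclideanSpace ℝ (Fin n) | c ≤ (inner ℝ u x : ℝ)}
          (fun _ => (1:ℝ)) x)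
      = Set.indicator {x : EuclideanSpace ℝ (Fin n) | (inner ℝ u x : ℝ) < c} (fun _ => (1:ℝ)) := by
  funext x
  simp only [Set.indicator_apply, Set.mem_setOf_eq]
  by_cases h : c ≤ (inner ℝ u x : ℝ)
  · rw [if_pos h, if_neg (not_lt.2 h)]; ring
  · rw [if_neg h, if_pos (not_le.1 h)]; ring

theorem existence_of_tests {n : ℕ} (α β : ℝ) (hα : 0 < α) (hβ : 0 < β)
    (θ₀ θ₁ : EuclideanSpace ℝ (Fin n)) :
    ∃ φ : EuclideanSpace ℝ (Fin n) → ℝ, Measurable φ ∧ (∀ x, φ x ∈ Set.Icc (0:ℝ) 1) ∧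
      ∀ θ : EuclideanSpace ℝ (Fin n), ‖θ - θ₁‖ ≤ ‖θ₀ - θ₁‖ / 2 →
        α * ∫ x, φ x ∂(gaussMeasure θ₀) + β * ∫ x, (1 - φ x) ∂(gaussMeasure θ) ≤
          α * (1 - stdNormalCDF (‖θ₀ - θ₁‖ / 2 / 2
                + (1 / (‖θ₀ - θ₁‖ / 2)) * Real.log (α / β)))
            + β * stdNormalCDF (-(‖θ₀ - θ₁‖ / 2) / 2
                + (1 / (‖θ₀ - θ₁‖ / 2)) * Real.log (α / β)) := by
  by_cases hdeg : θ₀ = θ₁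
  · -- degenerate case: θ₀ = θ₁
    subst hdeg
    have hzero : ‖θ₀ - θ₀‖ = 0 := by rw [sub_self, norm_zero]
    have harg1 : ‖θ₀ - θ₀‖ / 2 / 2 + (1 / (‖θ₀ - θ₀‖ / 2)) * Real.log (α / β) = 0 := by
      rw [hzero]; norm_num
    have harg2 : -(‖θ₀ - θ₀‖ / 2) / 2 + (1 / (‖θ₀ - θ₀‖ / 2)) * Real.log (α / β) = 0 := by
      rw [hzero]; norm_num
    rcases Nat.eq_zero_or_pos n with hn | hn
    · -- n = 0
      subst hn
      have hsub : Subsingleton (EuclideanSpace ℝ (Fin 0)) := by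
        exact ⟨fun a b => by ext i; exact i.elim0⟩
      refine ⟨fun _ => 1/2, measurable_const, fun x => by norm_num, ?_⟩
      intro θ hθ
      have hden : ∀ θ x : EuclideanSpace ℝ (Fin 0), gaussDensity θ x = 1 := by
        intro θ x
        rw [gaussDensity, @Subsingleton.elim _ hsub (x - θ) 0]
        norm_num
      have huniv : (volume : Measure (EuclideanSpace ℝ (Fin 0))) Set.univ = 1 := by
        have h := (EuclideanSpace.volume_preserving_symm_measurableEquiv_toLp (Fin 0)).measure_preimage
          (MeasurableSet.univ (α := Fin 0 → ℝ)).nullMeasurableSet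
        simpa [volume_pi, Measure.pi_univ] using h
      have hint : ∀ θ : EuclideanSpace ℝ (Fin 0), ∫ x, (1/2 : ℝ) ∂(gaussMeasure θ) = 1/2 := by
        intro θ
        rw [integral_gaussMeasure]
        simp only [hden, one_mul]
        rw [integral_const, measureReal_def, huniv]
        simp
      have h1 : ∫ x, (1 - (1:ℝ)/2) ∂(gaussMeasure θ) = 1/2 := by
        rw [show (1 - (1:ℝ)/2) = 1/2 by norm_num]
        exact hint θ
      rw [hint θ₀, h1, harg1, harg2, stdNormalCDF_zero]
      norm_num
    · -- n ≥ 1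
      set i₀ : Fin n := ⟨0, hn⟩
      set b := EuclideanSpace.basisFun (Fin n) ℝ with hbdef
      set c : ℝ := (inner ℝ (b i₀) θ₀ : ℝ) with hc
      refine ⟨Set.indicator {x : EuclideanSpace ℝ (Fin n) | c ≤ (inner ℝ (b i₀) x : ℝ)}
        (fun _ => (1:ℝ)), indicator_test_measurable _ c, indicator_test_mem_Icc _ c, ?_⟩
      intro θ hθ
      have hθeq : θ = θ₀ := by
        rw [hzero] at hθ
        have : ‖θ - θ₀‖ = 0 := le_antisymm (by simpa using hθ) (norm_nonneg _)
        rwa [norm_eq_zero, sub_eq_zero] at this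
      subst hθeq
      rw [one_sub_indicator_test, gauss_halfspace_ge, gauss_halfspace_lt, harg1, harg2,
        sub_self, stdNormalCDF_zero]
  · -- main case: θ₀ ≠ θ₁
    have hLpos : 0 < ‖θ₀ - θ₁‖ := by
      rw [norm_pos_iff, sub_ne_zero]; exact hdeg
    have hn : 0 < n := by
      rcases Nat.eq_zero_or_pos n with h | h
      · exfalso
        subst h
        have hsub : Subsingleton (EuclideanSpace ℝ (Fin 0)) := by
          exact ⟨fun a b => by ext i; exact i.elim0⟩
        exact hdeg (@Subsingleton.elim _ hsub θ₀ θ₁)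
      · exact h
    set i₀ : Fin n := ⟨0, hn⟩
    set L : ℝ := ‖θ₀ - θ₁‖ with hL
    set u : EuclideanSpace ℝ (Fin n) := ‖θ₁ - θ₀‖⁻¹ • (θ₁ - θ₀) with hu
    have hL' : ‖θ₁ - θ₀‖ = L := by rw [hL, norm_sub_rev]
    have hLne : ‖θ₁ - θ₀‖ ≠ 0 := by rw [hL']; exact hLpos.ne'
    have hunorm : ‖u‖ = 1 := by
      rw [hu, norm_smul, norm_inv, norm_norm, inv_mul_cancel₀ hLne]
    -- orthonormal basis with b i₀ = u
    have hcard : Module.finrank ℝ (EuclideanSpace ℝ (Fin n)) = Fintype.card (Fin n) := by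
      simp [finrank_euclideanSpace]
    have horth : Orthonormal ℝ (Set.restrict {i₀} (fun _ : Fin n => u)) := by
      rw [orthonormal_iff_ite]
      rintro ⟨i, hi⟩ ⟨j, hj⟩
      simp only [Set.mem_singleton_iff] at hi hj
      subst hi; subst hj
      rw [if_pos rfl]
      change (inner ℝ u u : ℝ) = 1
      rw [real_inner_self_eq_norm_mul_norm, hunorm]
      norm_num
    obtain ⟨b, hb⟩ := horth.exists_orthonormalBasis_extension_of_card_eq hcard
    have hbi : b i₀ = u := hb i₀ rfl
    set a : ℝ := L / 2 / 2 + (1 / (L / 2)) * Real.log (α / β) with ha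
    set c : ℝ := (inner ℝ (b i₀) θ₀ : ℝ) + a with hc
    refine ⟨Set.indicator {x : EuclideanSpace ℝ (Fin n) | c ≤ (inner ℝ (b i₀) x : ℝ)}
      (fun _ => (1:ℝ)), indicator_test_measurable _ c, indicator_test_mem_Icc _ c, ?_⟩
    intro θ hθ
    rw [one_sub_indicator_test, gauss_halfspace_ge, gauss_halfspace_lt]
    have hfirst : c - (inner ℝ (b i₀) θ₀ : ℝ) = a := by rw [hc]; ring
    -- the key inner product bound
    have h2ρ : (inner ℝ u (θ₁ - θ₀) : ℝ) = L := by
      rw [hu, real_inner_smul_left, real_inner_self_eq_norm_mul_norm, hL']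
      field_simp
    have hcs : |(inner ℝ u (θ - θ₁) : ℝ)| ≤ ‖θ - θ₁‖ := by
      calc |(inner ℝ u (θ - θ₁) : ℝ)| ≤ ‖u‖ * ‖θ - θ₁‖ := abs_real_inner_le_norm u _
        _ = ‖θ - θ₁‖ := by rw [hunorm, one_mul]
    have hsplit : (inner ℝ u (θ - θ₀) : ℝ) = (inner ℝ u (θ₁ - θ₀) : ℝ) + (inner ℝ u (θ - θ₁) : ℝ) := by
      rw [← inner_add_right]
      congr 1
      abel
    have hkey : L / 2 ≤ (inner ℝ u (θ - θ₀) : ℝ) := by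
      have h1 := (abs_le.1 hcs).1
      have h2 : ‖θ - θ₁‖ ≤ L / 2 := hθ
      rw [hsplit, h2ρ]
      linarith
    have hsecond : c - (inner ℝ (b i₀) θ : ℝ)
        ≤ -(L / 2) / 2 + (1 / (L / 2)) * Real.log (α / β) := by
      have hsub : (inner ℝ (b i₀) θ : ℝ) - (inner ℝ (b i₀) θ₀ : ℝ) = (inner ℝ u (θ - θ₀) : ℝ) := by
        rw [hbi, ← inner_sub_right]
      have : c - (inner ℝ (b i₀) θ : ℝ) = a - ((inner ℝ (b i₀) θ : ℝ) - (inner ℝ (b i₀) θ₀ : ℝ)) := by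
        rw [hc]; ring
      rw [this, hsub, ha]
      have := hkey
      linarith
    rw [hfirst]
    have hmono := stdNormalCDF_mono hsecond
    exact add_le_add_right (mul_le_mul_of_nonneg_left hmono hβ.le) _
end

section
/- Let Π_n be a prior on ℝ^n, θ₀ ∈ ℝ^n, and X ~ N(θ₀, I_n), with posterior Π_n(·|X) given by Bayes's rule with Gaussian likelihood. If there exist radii s_n < r_n with Π_n({θ : ‖θ−θ₀‖ < s_n}) / Π_n({θ : ‖θ−θ₀‖ < r_n}) = o(exp(−r_n²)), then E_{θ₀}[Π_n({θ : ‖θ−θ₀‖ < s_n} | X)] → 0 as n → ∞. -/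
open MeasureTheory Real Filter ENNReal

/-- The posterior mass of a set `B` given the observation `x`, for the prior `Pi0`
and Gaussian likelihood with mean `θ` and identity covariance. -/
noncomputable def posterior {n : ℕ} (Pi0 : Measure (EuclideanSpace ℝ (Fin n)))
    (B : Set (EuclideanSpace ℝ (Fin n))) (θ₀ x : EuclideanSpace ℝ (Fin n)) : ℝ≥0∞ :=
  (∫⁻ θ in B, ENNReal.ofReal (gaussDensity θ x / gaussDensity θ₀ x) ∂Pi0) /
    (∫⁻ θ, ENNReal.ofReal (gaussDensity θ x / gaussDensity θ₀ x) ∂Pi0)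

lemma gaussDensity_pos {n : ℕ} (θ x : EuclideanSpace ℝ (Fin n)) : 0 < gaussDensity θ x := by
  unfold gaussDensity
  positivity

lemma continuous_gaussDensity {n : ℕ} :
    Continuous fun p : EuclideanSpace ℝ (Fin n) × EuclideanSpace ℝ (Fin n) =>
      gaussDensity p.1 p.2 := by
  unfold gaussDensity
  fun_prop

lemma integrable_base {n : ℕ} :
    Integrable (fun v : EuclideanSpace ℝ (Fin n) => Real.exp (-(1/2 : ℝ) * ‖v‖ ^ 2)) := by
  have h := GaussianFourier.integrable_cexp_neg_mul_sq_norm_add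
    (V := EuclideanSpace ℝ (Fin n)) (b := (1/2 : ℂ)) (by norm_num) 0 0
  have h2 := h.re
  apply h2.congr
  filter_upwards with v
  simp only [zero_mul, add_zero]
  rw [show (-(1/2 : ℂ) * (‖v‖ : ℂ) ^ 2) = ((-(1/2 : ℝ) * ‖v‖ ^ 2 : ℝ) : ℂ) by push_cast; ring]
  exact Complex.exp_ofReal_re _

lemma integral_base {n : ℕ} :
    ∫ v : EuclideanSpace ℝ (Fin n), Real.exp (-(1/2 : ℝ) * ‖v‖ ^ 2)
      = (2 * Real.pi) ^ ((n : ℝ) / 2) := by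
  rw [GaussianFourier.integral_rexp_neg_mul_sq_norm (by norm_num : (0:ℝ) < 1/2)]
  rw [finrank_euclideanSpace_fin]
  congr 1
  ring

lemma gaussDensity_eq {n : ℕ} (θ x : EuclideanSpace ℝ (Fin n)) :
    gaussDensity θ x = (2 * Real.pi) ^ (-(n : ℝ) / 2) * Real.exp (-(1/2 : ℝ) * ‖x - θ‖ ^ 2) := by
  unfold gaussDensity
  congr 1
  ring

lemma integrable_gaussDensity {n : ℕ} (θ : EuclideanSpace ℝ (Fin n)) :
    Integrable (gaussDensity θ) := by
  exact ((integrable_base.comp_sub_right θ).const_mul _).congr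
    (Filter.Eventually.of_forall fun x => (gaussDensity_eq θ x).symm)

lemma integral_gaussDensity {n : ℕ} (θ : EuclideanSpace ℝ (Fin n)) :
    ∫ x, gaussDensity θ x = 1 := by
  calc ∫ x, gaussDensity θ x
      = ∫ x : EuclideanSpace ℝ (Fin n),
          (2 * Real.pi) ^ (-(n : ℝ) / 2) * Real.exp (-(1/2 : ℝ) * ‖x - θ‖ ^ 2) := by
        simp_rw [gaussDensity_eq]
    _ = (2 * Real.pi) ^ (-(n : ℝ) / 2)
        * ∫ x : EuclideanSpace ℝ (Fin n), Real.exp (-(1/2 : ℝ) * ‖x - θ‖ ^ 2) :=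
        integral_const_mul _ _
    _ = (2 * Real.pi) ^ (-(n : ℝ) / 2)
        * ∫ x : EuclideanSpace ℝ (Fin n), Real.exp (-(1/2 : ℝ) * ‖x‖ ^ 2) :=
        congrArg _ (integral_sub_right_eq_self
          (fun v : EuclideanSpace ℝ (Fin n) => Real.exp (-(1/2 : ℝ) * ‖v‖ ^ 2)) θ)
    _ = 1 := by
        rw [integral_base, ← Real.rpow_add (by positivity), neg_div, neg_add_cancel,
          Real.rpow_zero]

lemma lintegral_gaussDensity {n : ℕ} (θ : EuclideanSpace ℝ (Fin n)) :
    ∫⁻ x, ENNReal.ofReal (gaussDensity θ x) = 1 := by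
  rw [← ofReal_integral_eq_lintegral_ofReal (integrable_gaussDensity θ)
    (Filter.Eventually.of_forall fun x => (gaussDensity_pos θ x).le),
    integral_gaussDensity]
  simp

instance isProb_gaussMeasure {n : ℕ} (θ : EuclideanSpace ℝ (Fin n)) :
    IsProbabilityMeasure (gaussMeasure θ) := by
  constructor
  rw [gaussMeasure, withDensity_apply _ MeasurableSet.univ, Measure.restrict_univ,
    lintegral_gaussDensity]

lemma key_fubini {n : ℕ} (Pi0 : Measure (EuclideanSpace ℝ (Fin n))) [SFinite Pi0]
    (θ₀ : EuclideanSpace ℝ (Fin n)) (B : Set (EuclideanSpace ℝ (Fin n))) :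
    ∫⁻ x, (∫⁻ θ in B, ENNReal.ofReal (gaussDensity θ x / gaussDensity θ₀ x) ∂Pi0)
      ∂(gaussMeasure θ₀) = Pi0 B := by
  have hmeas : Measurable fun p : EuclideanSpace ℝ (Fin n) × EuclideanSpace ℝ (Fin n) =>
      ENNReal.ofReal (gaussDensity p.2 p.1 / gaussDensity θ₀ p.1) :=
    ENNReal.measurable_ofReal.comp
      ((continuous_gaussDensity.comp (continuous_snd.prodMk continuous_fst)).div
        (continuous_gaussDensity.comp (continuous_const.prodMk continuous_fst))
        (fun p => (gaussDensity_pos θ₀ p.1).ne')).measurable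
  have hF : Measurable fun x : EuclideanSpace ℝ (Fin n) =>
      ∫⁻ θ in B, ENNReal.ofReal (gaussDensity θ x / gaussDensity θ₀ x) ∂Pi0 :=
    Measurable.lintegral_prod_right' hmeas
  have hg0 : Measurable fun x : EuclideanSpace ℝ (Fin n) =>
      ENNReal.ofReal (gaussDensity θ₀ x) :=
    (Continuous.measurable (by unfold gaussDensity; fun_prop)).ennreal_ofReal
  rw [gaussMeasure, lintegral_withDensity_eq_lintegral_mul _ hg0 hF]
  have hpt : ∀ x : EuclideanSpace ℝ (Fin n),
      (ENNReal.ofReal (gaussDensity θ₀ x)) *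
        (∫⁻ θ in B, ENNReal.ofReal (gaussDensity θ x / gaussDensity θ₀ x) ∂Pi0)
      = ∫⁻ θ in B, ENNReal.ofReal (gaussDensity θ x) ∂Pi0 := by
    intro x
    rw [← lintegral_const_mul _ (by
      exact (((continuous_gaussDensity.comp
        (continuous_id.prodMk continuous_const)).div continuous_const
        (fun θ => (gaussDensity_pos θ₀ x).ne')).measurable).ennreal_ofReal)]
    congr 1 with θ
    rw [← ENNReal.ofReal_mul (gaussDensity_pos θ₀ x).le,
      mul_div_cancel₀ _ (gaussDensity_pos θ₀ x).ne']
  calc ∫⁻ x, ((fun x => ENNReal.ofReal (gaussDensity θ₀ x)) *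
        fun x => ∫⁻ θ in B, ENNReal.ofReal (gaussDensity θ x / gaussDensity θ₀ x) ∂Pi0) x
      = ∫⁻ x, ∫⁻ θ, ENNReal.ofReal (gaussDensity θ x) ∂(Pi0.restrict B) := by
        congr 1 with x
        exact hpt x
    _ = ∫⁻ θ, ∫⁻ x, ENNReal.ofReal (gaussDensity θ x) ∂volume ∂(Pi0.restrict B) := by
        apply lintegral_lintegral_swap
        exact (((continuous_gaussDensity.comp
          (continuous_snd.prodMk continuous_fst)).measurable).ennreal_ofReal).aemeasurable
    _ = Pi0 B := by
        simp_rw [lintegral_gaussDensity]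
        simp

lemma gauss_ratio {n : ℕ} (θ₀ θ x : EuclideanSpace ℝ (Fin n)) :
    gaussDensity θ₀ x * (gaussDensity θ x / gaussDensity θ₀ x)⁻¹
      = Real.exp (‖θ - θ₀‖ ^ 2) * gaussDensity (θ₀ - (θ - θ₀)) x := by
  have h2 : x - θ = (x - θ₀) - (θ - θ₀) := by abel
  have h3 : x - (θ₀ - (θ - θ₀)) = (x - θ₀) + (θ - θ₀) := by abel
  unfold gaussDensity
  rw [h2, h3]
  have hc : (0:ℝ) < (2 * Real.pi) ^ (-(n : ℝ) / 2) := by positivity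
  rw [inv_div, mul_div_assoc', div_eq_iff (by positivity)]
  have hee : rexp (-‖x - θ₀‖ ^ 2 / 2) * rexp (-‖x - θ₀‖ ^ 2 / 2)
      = rexp (‖θ - θ₀‖ ^ 2) * rexp (-‖x - θ₀ + (θ - θ₀)‖ ^ 2 / 2)
        * rexp (-‖x - θ₀ - (θ - θ₀)‖ ^ 2 / 2) := by
    rw [← Real.exp_add, ← Real.exp_add, ← Real.exp_add]
    congr 1
    rw [norm_add_sq_real (x - θ₀) (θ - θ₀), norm_sub_sq_real (x - θ₀) (θ - θ₀)]
    ring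
  linear_combination (((2 * Real.pi) ^ (-(n : ℝ) / 2)) ^ 2) * hee

lemma chi2 {n : ℕ} (θ₀ θ : EuclideanSpace ℝ (Fin n)) :
    ∫⁻ x, (ENNReal.ofReal (gaussDensity θ x / gaussDensity θ₀ x))⁻¹ ∂(gaussMeasure θ₀)
      = ENNReal.ofReal (Real.exp (‖θ - θ₀‖ ^ 2)) := by
  have hg0 : Measurable fun x : EuclideanSpace ℝ (Fin n) =>
      ENNReal.ofReal (gaussDensity θ₀ x) :=
    (Continuous.measurable (by unfold gaussDensity; fun_prop)).ennreal_ofReal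
  have hinner : Measurable fun x : EuclideanSpace ℝ (Fin n) =>
      (ENNReal.ofReal (gaussDensity θ x / gaussDensity θ₀ x))⁻¹ := by
    apply Measurable.inv
    exact (((continuous_gaussDensity.comp (continuous_const.prodMk continuous_id)).div
      (continuous_gaussDensity.comp (continuous_const.prodMk continuous_id))
      (fun x => (gaussDensity_pos θ₀ x).ne')).measurable).ennreal_ofReal
  rw [gaussMeasure, lintegral_withDensity_eq_lintegral_mul _ hg0 hinner]
  calc ∫⁻ x, ((fun x => ENNReal.ofReal (gaussDensity θ₀ x)) * fun x =>
        (ENNReal.ofReal (gaussDensity θ x / gaussDensity θ₀ x))⁻¹) x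
      = ∫⁻ x, ENNReal.ofReal (Real.exp (‖θ - θ₀‖ ^ 2)
          * gaussDensity (θ₀ - (θ - θ₀)) x) := by
        congr 1 with x
        simp only [Pi.mul_apply]
        rw [← ENNReal.ofReal_inv_of_pos (div_pos (gaussDensity_pos _ _) (gaussDensity_pos _ _)),
          ← ENNReal.ofReal_mul (gaussDensity_pos θ₀ x).le, gauss_ratio]
    _ = ENNReal.ofReal (Real.exp (‖θ - θ₀‖ ^ 2)) := by
        simp_rw [ENNReal.ofReal_mul (Real.exp_nonneg _)]
        rw [lintegral_const_mul' _ _ ENNReal.ofReal_ne_top, lintegral_gaussDensity, mul_one]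

lemma sq_le_mul_lintegral_inv {α : Type*} [MeasurableSpace α] (μ : Measure α)
    (f : α → ℝ≥0∞) (hf : AEMeasurable f μ) (h0 : ∀ a, f a ≠ 0) (ht : ∀ a, f a ≠ ∞) :
    μ Set.univ * μ Set.univ ≤ (∫⁻ a, f a ∂μ) * ∫⁻ a, (f a)⁻¹ ∂μ := by
  have hconj : Real.HolderConjugate 2 2 := Real.HolderConjugate.two_two
  have h := ENNReal.lintegral_mul_le_Lp_mul_Lq μ hconj
    (f := fun a => f a ^ (1/2 : ℝ)) (g := fun a => (f a)⁻¹ ^ (1/2 : ℝ))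
    (hf.pow aemeasurable_const) (hf.inv.pow aemeasurable_const)
  have h1 : ∀ a : α, (fun a => f a ^ (1/2 : ℝ)) a * (fun a => (f a)⁻¹ ^ (1/2 : ℝ)) a
      = (1 : ℝ≥0∞) := by
    intro a
    rw [← ENNReal.mul_rpow_of_nonneg _ _ (by norm_num : (0:ℝ) ≤ 1/2),
      ENNReal.mul_inv_cancel (h0 a) (ht a), ENNReal.one_rpow]
  have h2 : ∀ a : α, ((f a) ^ (1/2 : ℝ)) ^ (2 : ℝ) = f a := by
    intro a; rw [← ENNReal.rpow_mul]; norm_num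
  have h2' : ∀ a : α, (((f a)⁻¹) ^ (1/2 : ℝ)) ^ (2 : ℝ) = (f a)⁻¹ := by
    intro a; rw [← ENNReal.rpow_mul]; norm_num
  simp only [Pi.mul_apply, h1, h2, h2', lintegral_one] at h
  calc μ Set.univ * μ Set.univ
      = (μ Set.univ) ^ (2 : ℝ) := by
        rw [show ((2:ℝ)) = ((2:ℕ):ℝ) by norm_num, ENNReal.rpow_natCast, pow_two]
    _ ≤ (((∫⁻ a, f a ∂μ) ^ (1/2 : ℝ)) * ((∫⁻ a, (f a)⁻¹ ∂μ) ^ (1/2 : ℝ))) ^ (2 : ℝ) :=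
        ENNReal.rpow_le_rpow h (by norm_num)
    _ = (∫⁻ a, f a ∂μ) * ∫⁻ a, (f a)⁻¹ ∂μ := by
        rw [ENNReal.mul_rpow_of_nonneg _ _ (by norm_num : (0:ℝ) ≤ 2),
          ← ENNReal.rpow_mul, ← ENNReal.rpow_mul]
        norm_num

lemma main_bound {n : ℕ} (Pi0 : Measure (EuclideanSpace ℝ (Fin n)))
    [IsProbabilityMeasure Pi0] (θ₀ : EuclideanSpace ℝ (Fin n))
    (B C : Set (EuclideanSpace ℝ (Fin n))) (hBC : B ⊆ C) (hC : MeasurableSet C)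
    (R : ℝ) (hRC : ∀ θ ∈ C, ‖θ - θ₀‖ ^ 2 ≤ R)
    (δ : ℝ≥0∞) (hδ0 : δ ≠ 0) (hδt : δ ≠ ∞) (hb0 : Pi0 C ≠ 0) :
    ∫⁻ x, posterior Pi0 B θ₀ x ∂(gaussMeasure θ₀)
      ≤ δ * ENNReal.ofReal (Real.exp R) + Pi0 B / (δ * Pi0 C) := by
  have hLm : Measurable fun p :EuclideanSpace ℝ (Fin n) × EuclideanSpace ℝ (Fin n) =>
      ENNReal.ofReal (gaussDensity p.2 p.1 / gaussDensity θ₀ p.1) :=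
    (((continuous_gaussDensity.comp (continuous_snd.prodMk continuous_fst)).div
      (continuous_gaussDensity.comp (continuous_const.prodMk continuous_fst))
      (fun p => (gaussDensity_pos θ₀ p.1).ne')).measurable).ennreal_ofReal
  have hLθ : ∀ x : EuclideanSpace ℝ (Fin n), Measurable fun θ :EuclideanSpace ℝ (Fin n) =>
      ENNReal.ofReal (gaussDensity θ x / gaussDensity θ₀ x) := fun x =>
    (((continuous_gaussDensity.comp (continuous_id.prodMk continuous_const)).div_const
      _).measurable).ennreal_ofReal
  have hDC : Measurable fun x :EuclideanSpace ℝ (Fin n) =>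
      ∫⁻ θ in C, ENNReal.ofReal (gaussDensity θ x / gaussDensity θ₀ x) ∂Pi0 :=
    Measurable.lintegral_prod_right' hLm
  have hIC : Measurable fun x :EuclideanSpace ℝ (Fin n) =>
      ∫⁻ θ in C, (ENNReal.ofReal (gaussDensity θ x / gaussDensity θ₀ x))⁻¹ ∂Pi0 :=
    Measurable.lintegral_prod_right' hLm.inv
  set b := Pi0 C with hbdef
  have hbt : b ≠ ∞ := measure_ne_top _ _
  set X := ENNReal.ofReal (Real.exp R) with hXdef
  set A : Set (EuclideanSpace ℝ (Fin n)) := {x | (∫⁻ θ in C,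
    ENNReal.ofReal (gaussDensity θ x / gaussDensity θ₀ x) ∂Pi0) < δ * b} with hAdef
  have hA : MeasurableSet A := hDC measurableSet_Iio
  have hδb0 : δ * b ≠ 0 := mul_ne_zero hδ0 hb0
  -- pointwise bound
  have hpoint : ∀ x : EuclideanSpace ℝ (Fin n), posterior Pi0 B θ₀ x ≤ A.indicator (fun _ => (1:ℝ≥0∞)) x
      + (∫⁻ θ in B, ENNReal.ofReal (gaussDensity θ x / gaussDensity θ₀ x) ∂Pi0)
          / (δ * b) := by
    intro x
    by_cases hx : x ∈ A
    · rw [Set.indicator_of_mem hx]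
      refine le_trans ?_ le_self_add
      unfold posterior
      exact le_trans (ENNReal.div_le_div_right (setLIntegral_le_lintegral _ _) _)
        ENNReal.div_self_le_one
    · rw [Set.indicator_of_notMem hx, zero_add]
      have hx' : δ * b ≤ ∫⁻ θ in C,
          ENNReal.ofReal (gaussDensity θ x / gaussDensity θ₀ x) ∂Pi0 := not_lt.mp hx
      have hD : δ * b ≤ ∫⁻ θ, ENNReal.ofReal (gaussDensity θ x / gaussDensity θ₀ x) ∂Pi0 :=
        hx'.trans (setLIntegral_le_lintegral _ _)
      unfold posterior
      exact ENNReal.div_le_div le_rfl hD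
  -- Markov bound on the bad event
  have markov : gaussMeasure θ₀ A ≤ δ * X := by
    have hsub : A ⊆ {x :EuclideanSpace ℝ (Fin n) | b / δ ≤ ∫⁻ θ in C,
        (ENNReal.ofReal (gaussDensity θ x / gaussDensity θ₀ x))⁻¹ ∂Pi0} := by
      intro x hx
      have hcs := sq_le_mul_lintegral_inv (Pi0.restrict C)
        (fun θ => ENNReal.ofReal (gaussDensity θ x / gaussDensity θ₀ x))
        (hLθ x).aemeasurable
        (fun θ => (ENNReal.ofReal_pos.mpr
          (div_pos (gaussDensity_pos _ _) (gaussDensity_pos _ _))).ne')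
        (fun θ => ENNReal.ofReal_ne_top)
      rw [Measure.restrict_apply_univ] at hcs
      have h5 : b * b ≤ (δ * b) * ∫⁻ θ in C,
          (ENNReal.ofReal (gaussDensity θ x / gaussDensity θ₀ x))⁻¹ ∂Pi0 :=
        hcs.trans (mul_le_mul_left (le_of_lt hx) _)
      have h6 : b ≤ δ * ∫⁻ θ in C,
          (ENNReal.ofReal (gaussDensity θ x / gaussDensity θ₀ x))⁻¹ ∂Pi0 := by
        rw [mul_right_comm] at h5
        exact (ENNReal.mul_le_mul_iff_left hb0 hbt).mp h5
      rw [Set.mem_setOf_eq, ENNReal.div_le_iff_le_mul (Or.inl hδ0) (Or.inl hδt)]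
      rwa [mul_comm δ _] at h6
    have hbδ0 : b / δ ≠ 0 := by
      simp [ENNReal.div_eq_zero_iff, hb0, hδt]
    have hbδt : b / δ ≠ ∞ := by
      simp [ENNReal.div_eq_top, hb0, hbt, hδ0]
    have h9 : (∫⁻ x, (∫⁻ θ in C,
        (ENNReal.ofReal (gaussDensity θ x / gaussDensity θ₀ x))⁻¹ ∂Pi0)
          ∂(gaussMeasure θ₀)) ≤ X * b := by
      rw [lintegral_lintegral_swap hLm.inv.aemeasurable]
      calc ∫⁻ θ, (∫⁻ x, (ENNReal.ofReal (gaussDensity θ x / gaussDensity θ₀ x))⁻¹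
            ∂(gaussMeasure θ₀)) ∂(Pi0.restrict C)
          = ∫⁻ θ in C, ENNReal.ofReal (Real.exp (‖θ - θ₀‖ ^ 2)) ∂Pi0 :=
            lintegral_congr fun θ => chi2 θ₀ θ
        _ ≤ ∫⁻ θ in C, X ∂Pi0 := setLIntegral_mono' hC fun θ hθ =>
            ENNReal.ofReal_le_ofReal (Real.exp_le_exp.mpr (hRC θ hθ))
        _ = X * b := by rw [setLIntegral_const]
    calc gaussMeasure θ₀ A
        ≤ gaussMeasure θ₀ {x :EuclideanSpace ℝ (Fin n) | b / δ ≤ ∫⁻ θ in C,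
            (ENNReal.ofReal (gaussDensity θ x / gaussDensity θ₀ x))⁻¹ ∂Pi0} :=
          measure_mono hsub
      _ ≤ (∫⁻ x, (∫⁻ θ in C,
            (ENNReal.ofReal (gaussDensity θ x / gaussDensity θ₀ x))⁻¹ ∂Pi0)
              ∂(gaussMeasure θ₀)) / (b / δ) :=
          meas_ge_le_lintegral_div hIC.aemeasurable hbδ0 hbδt
      _ ≤ (X * b) / (b / δ) := ENNReal.div_le_div_right h9 _
      _ ≤ δ * X := by
          rw [ENNReal.div_le_iff_le_mul (Or.inl hbδ0) (Or.inl hbδt)]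
          have : δ * X * (b / δ) = X * (δ * (b / δ)) := by ring
          rw [this, ENNReal.mul_div_cancel hδ0 hδt]
  -- combine
  calc ∫⁻ x, posterior Pi0 B θ₀ x ∂(gaussMeasure θ₀)
      ≤ ∫⁻ x, (A.indicator (fun _ => (1:ℝ≥0∞)) x
          + (∫⁻ θ in B, ENNReal.ofReal (gaussDensity θ x / gaussDensity θ₀ x) ∂Pi0)
              / (δ * b)) ∂(gaussMeasure θ₀) := lintegral_mono hpoint
    _ = gaussMeasure θ₀ A
        + (∫⁻ x, (∫⁻ θ in B, ENNReal.ofReal (gaussDensity θ x / gaussDensity θ₀ x) ∂Pi0)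
            ∂(gaussMeasure θ₀)) / (δ * b) := by
        rw [lintegral_add_left (f := A.indicator fun _ => (1:ℝ≥0∞)) (measurable_one.indicator hA)]
        congr 1
        · exact lintegral_indicator_one hA
        · simp_rw [div_eq_mul_inv]
          rw [lintegral_mul_const' _ _ (ENNReal.inv_ne_top.mpr hδb0)]
    _ = gaussMeasure θ₀ A + Pi0 B / (δ * b) := by rw [key_fubini]
    _ ≤ δ * X + Pi0 B / (δ * b) := add_le_add markov le_rfl

theorem posterior_no_mass_on_small_balls
    (Pi0 : (n : ℕ) → Measure (EuclideanSpace ℝ (Fin n)))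
    (hPi0 : ∀ n, IsProbabilityMeasure (Pi0 n))
    (θ₀ : (n : ℕ) → EuclideanSpace ℝ (Fin n))
    (s r : ℕ → ℝ) (hsr : ∀ n, s n < r n) (hr : ∀ n, 0 < r n)
    (hlittleo :
      (fun n => ((Pi0 n) {θ | ‖θ - θ₀ n‖ < s n}).toReal
          / ((Pi0 n) {θ | ‖θ - θ₀ n‖ < r n}).toReal)
        =o[Filter.atTop] fun n => Real.exp (-(r n) ^ 2)) :
    Filter.Tendsto
      (fun n => ∫⁻ x, posterior (Pi0 n) {θ | ‖θ - θ₀ n‖ < s n} (θ₀ n) x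
          ∂(gaussMeasure (θ₀ n)))
      Filter.atTop (nhds 0) := by
  set ρ : ℕ → ℝ := fun n => ((Pi0 n) {θ | ‖θ - θ₀ n‖ < s n}).toReal
      / ((Pi0 n) {θ | ‖θ - θ₀ n‖ < r n}).toReal with hρdef
  have hρ0 : ∀ n, 0 ≤ ρ n := fun n => div_nonneg ENNReal.toReal_nonneg ENNReal.toReal_nonneg
  set g : ℕ → ℝ := fun n => 2 * Real.sqrt (ρ n * Real.exp ((r n) ^ 2)) with hgdef
  -- the key per-n bound
  have hbound : ∀ n, (∫⁻ x, posterior (Pi0 n) {θ | ‖θ - θ₀ n‖ < s n} (θ₀ n) x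
      ∂(gaussMeasure (θ₀ n))) ≤ ENNReal.ofReal (g n) := by
    intro n
    haveI := hPi0 n
    set B : Set (EuclideanSpace ℝ (Fin n)) := {θ | ‖θ - θ₀ n‖ < s n} with hBdef
    set C : Set (EuclideanSpace ℝ (Fin n)) := {θ | ‖θ - θ₀ n‖ < r n} with hCdef
    by_cases ha : (Pi0 n) B = 0
    · have hzero : ∀ x, posterior (Pi0 n) B (θ₀ n) x = 0 := by
        intro x
        unfold posterior
        rw [Measure.restrict_eq_zero.mpr ha, lintegral_zero_measure, ENNReal.zero_div]
      simp only [hzero, lintegral_zero]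
      exact zero_le
    · have hBC : B ⊆ C := fun θ hθ => lt_trans hθ (hsr n)
      have hb0 : (Pi0 n) C ≠ 0 := fun h =>
        ha (le_antisymm (h ▸ measure_mono hBC) zero_le)
      have hat : (Pi0 n) B ≠ ∞ := measure_ne_top _ _
      have hbt : (Pi0 n) C ≠ ∞ := measure_ne_top _ _
      have hap : 0 < ((Pi0 n) B).toReal := ENNReal.toReal_pos ha hat
      have hbp : 0 < ((Pi0 n) C).toReal := ENNReal.toReal_pos hb0 hbt
      have hρp : 0 < ρ n := div_pos hap hbp
      have hC : MeasurableSet C :=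
        (isOpen_lt (by fun_prop) continuous_const).measurableSet
      have hRC : ∀ θ ∈ C, ‖θ - θ₀ n‖ ^ 2 ≤ (r n) ^ 2 := fun θ hθ =>
        pow_le_pow_left₀ (norm_nonneg _) (le_of_lt hθ) 2
      set T : ℝ := Real.sqrt (ρ n) * Real.exp ((r n) ^ 2 / 2) with hTdef
      have hTpos : 0 < T := mul_pos (Real.sqrt_pos.mpr hρp) (Real.exp_pos _)
      set δ : ℝ≥0∞ := ENNReal.ofReal (Real.sqrt (ρ n) * Real.exp (-(r n) ^ 2 / 2)) with hδdef
      have hδr : 0 < Real.sqrt (ρ n) * Real.exp (-(r n) ^ 2 / 2) :=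
        mul_pos (Real.sqrt_pos.mpr hρp) (Real.exp_pos _)
      have hδ0 : δ ≠ 0 := (ENNReal.ofReal_pos.mpr hδr).ne'
      have hδt : δ ≠ ∞ := ENNReal.ofReal_ne_top
      refine le_trans (main_bound (Pi0 n) (θ₀ n) B C hBC hC ((r n) ^ 2) hRC δ hδ0 hδt hb0) ?_
      have hterm1 : δ * ENNReal.ofReal (Real.exp ((r n) ^ 2)) = ENNReal.ofReal T := by
        rw [hδdef, ← ENNReal.ofReal_mul hδr.le, hTdef]
        congr 1
        rw [mul_assoc, ← Real.exp_add]
        ring_nf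
      have hterm2 : (Pi0 n) B / (δ * (Pi0 n) C) = ENNReal.ofReal T := by
        rw [hδdef, ← ENNReal.ofReal_toReal hbt, ← ENNReal.ofReal_mul hδr.le,
          ← ENNReal.ofReal_toReal hat,
          ← ENNReal.ofReal_div_of_pos (mul_pos hδr hbp)]
        congr 1
        rw [div_eq_iff (mul_pos hδr hbp).ne', eq_comm]
        calc Real.sqrt (ρ n) * Real.exp ((r n) ^ 2 / 2)
              * (Real.sqrt (ρ n) * Real.exp (-(r n) ^ 2 / 2) * ((Pi0 n) C).toReal)
            = (Real.sqrt (ρ n) * Real.sqrt (ρ n))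
              * (Real.exp ((r n) ^ 2 / 2) * Real.exp (-(r n) ^ 2 / 2))
              * ((Pi0 n) C).toReal := by ring
          _ = ρ n * ((Pi0 n) C).toReal := by
              rw [Real.mul_self_sqrt (hρ0 n), ← Real.exp_add,
                show (r n) ^ 2 / 2 + -(r n) ^ 2 / 2 = 0 by ring, Real.exp_zero]
              ring
          _ = ((Pi0 n) B).toReal := by
              rw [hρdef]
              exact div_mul_cancel₀ _ hbp.ne'
      rw [hterm1, hterm2, ← ENNReal.ofReal_add hTpos.le hTpos.le]
      apply ENNReal.ofReal_le_ofReal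
      have hg : g n = 2 * Real.sqrt (ρ n * Real.exp ((r n) ^ 2)) := rfl
      have hsq : Real.sqrt (ρ n * Real.exp ((r n) ^ 2)) = T := by
        rw [Real.sqrt_mul (hρ0 n), hTdef, ← Real.exp_half]
      rw [hg, hsq]
      linarith
  -- conclude by squeezing
  have h1 : Filter.Tendsto (fun n => ρ n * Real.exp ((r n) ^ 2)) Filter.atTop (nhds 0) := by
    have := hlittleo.tendsto_div_nhds_zero
    refine this.congr fun n => ?_
    rw [Real.exp_neg, division_def, inv_inv]
  have h2 : Filter.Tendsto g Filter.atTop (nhds 0) := by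
    have h3 := (Real.continuous_sqrt.continuousAt (x := 0)).tendsto.comp h1
    rw [Real.sqrt_zero] at h3
    simpa [hgdef] using h3.const_mul 2
  have h4 : Filter.Tendsto (fun n => ENNReal.ofReal (g n)) Filter.atTop (nhds 0) := by
    have := ENNReal.tendsto_ofReal h2
    simpa using this
  exact tendsto_of_tendsto_of_tendsto_of_le_of_le tendsto_const_nhds h4
    (fun n => zero_le) hbound
end
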